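/- Let Y be a hereditarily indecomposable Banach space and X = Y ⊕ ℓ₂. Then X contains no direct sum of two non-Hilbertian subspaces: if U, V are infinite-dimensional closed subspaces of X with U ∩ V = {0} and U + V closed, then U or V is isomorphic to a Hilbert space. -/

import Mathlib

set_option maxHeartbeats 1600000
set_option synthInstance.maxHeartbeats 400000

/-- The Hilbert space `ℓ₂` of square-summable real sequences. -/
noncomputable abbrev ellTwo : Type := lp (fun _ : ℕ => ℝ) 2

/-- A Banach space `Y` is hereditarily indecomposable (HI) if it contains no topological
direct sum of two infinite-dimensional closed subspaces. -/
def IsHI (Y : Type) [NormedAddCommGroup Y] [NormedSpace ℝ Y] : Prop :=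
  ∀ U V : Submodule ℝ Y, IsClosed (U : Set Y) → IsClosed (V : Set Y) →
    ¬ FiniteDimensional ℝ U → ¬ FiniteDimensional ℝ V →
    U ⊓ V = ⊥ → ¬ IsClosed ((U ⊔ V : Submodule ℝ Y) : Set Y)

/-- A (finite- or infinite-dimensional) normed space `E` is Hilbertian if it admits an
equivalent inner-product norm, i.e. it is linearly isomorphic to a Hilbert space. -/
def IsHilbertian (E : Type) [NormedAddCommGroup E] [Module ℝ E] : Prop :=
  ∃ (B : E →ₗ[ℝ] E →ₗ[ℝ] ℝ) (c C : ℝ), 0 < c ∧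
    (∀ x y, B x y = B y x) ∧
    ∀ x, c * ‖x‖ ^ 2 ≤ B x x ∧ B x x ≤ C * ‖x‖ ^ 2

open scoped RealInnerProductSpace

section auxlemmas

variable {E H : Type*} [NormedAddCommGroup E] [NormedSpace ℝ E]
  [NormedAddCommGroup H] [NormedSpace ℝ H]

theorem exists_next (T : E →L[ℝ] H)
    (h : ∀ s : Finset (E →L[ℝ] ℝ), ∀ c : ℝ, 0 < c →
      ∃ x : E, ‖x‖ = 1 ∧ (∀ g ∈ s, g x = 0) ∧ ‖T x‖ < c)
    (F : Submodule ℝ E) [FiniteDimensional ℝ F] {θ c' : ℝ} (hθ : 0 < θ)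
    (hc' : 0 < c') :
    ∃ x : E, ‖x‖ = 1 ∧ ‖T x‖ < c' ∧
      ∀ y ∈ F, ∀ t : ℝ, (1 - θ) * ‖y‖ ≤ ‖y + t • x‖ := by
  classical
  -- the unit sphere of F, seen inside E
  set SF : Set E := {y : E | y ∈ F ∧ ‖y‖ = 1} with hSF
  have hSFcompact : IsCompact SF := by
    haveI : ProperSpace F := FiniteDimensional.proper ℝ F
    have : SF = (Subtype.val : F → E) '' (Metric.sphere (0 : F) 1) := by
      ext y
      constructor
      · rintro ⟨hyF, hy1⟩
        exact ⟨⟨y, hyF⟩, mem_sphere_zero_iff_norm.2 (by simpa [Submodule.coe_norm] using hy1), rfl⟩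
      · rintro ⟨z, hz, rfl⟩
        have : ‖z‖ = 1 := mem_sphere_zero_iff_norm.1 hz
        exact ⟨z.2, by simpa [Submodule.coe_norm] using this⟩
    rw [this]
    exact (isCompact_sphere (0 : F) 1).image continuous_subtype_val
  -- finite θ-net of SF inside SF
  obtain ⟨net, hnetSF, hnetfin, hcover⟩ :
      ∃ net ⊆ SF, net.Finite ∧ SF ⊆ ⋃ z ∈ net, Metric.ball z θ := by
    have hcov : SF ⊆ ⋃ z ∈ SF, Metric.ball z θ := fun y hy =>
      Set.mem_biUnion hy (by simpa using hθ)
    obtain ⟨net, hsub, hfin, hc⟩ := hSFcompact.elim_finite_subcover_image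
      (fun z _ => Metric.isOpen_ball) hcov
    exact ⟨net, hsub, hfin, hc⟩
  -- norming functionals for net points
  have hgex : ∀ z ∈ net, ∃ g : E →L[ℝ] ℝ, ‖g‖ = 1 ∧ g z = ‖z‖ := by
    intro z hz
    have hz1 : ‖z‖ = 1 := (hnetSF hz).2
    exact exists_dual_vector ℝ z (by intro h0; rw [h0] at hz1; simp at hz1)
  choose! g hgnorm hgval using hgex
  set s : Finset (E →L[ℝ] ℝ) := hnetfin.toFinset.image g with hs
  obtain ⟨x, hx1, hxker, hxT⟩ := h s c' hc'
  refine ⟨x, hx1, hxT, ?_⟩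
  intro y hyF t
  rcases eq_or_ne y 0 with rfl | hy0
  · simp
  · have hyn : 0 < ‖y‖ := norm_pos_iff.2 hy0
    set u : E := ‖y‖⁻¹ • y with hu
    have huF : u ∈ F := F.smul_mem _ hyF
    have hun : ‖u‖ = 1 := by
      rw [hu, norm_smul, norm_inv, norm_norm, inv_mul_cancel₀ hyn.ne']
    obtain ⟨z, hznet, hzball⟩ : ∃ z ∈ net, u ∈ Metric.ball z θ := by
      have := hcover ⟨huF, hun⟩
      simpa using this
    have hgz : g z x = 0 := hxker _ (Finset.mem_image_of_mem g (hnetfin.mem_toFinset.2 hznet))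
    have hgu : 1 - θ ≤ g z u := by
      have h1 : g z z = 1 := by rw [hgval z hznet, (hnetSF hznet).2]
      have h2 : |g z u - g z z| ≤ θ := by
        have : |g z (u - z)| ≤ ‖g z‖ * ‖u - z‖ := by
          simpa [Real.norm_eq_abs] using (g z).le_opNorm (u - z)
        rw [map_sub] at this
        have hd : ‖u - z‖ ≤ θ := by
          have := Metric.mem_ball.1 hzball
          rw [dist_eq_norm] at this
          linarith
        calc |g z u - g z z| ≤ ‖g z‖ * ‖u - z‖ := this
          _ = ‖u - z‖ := by rw [hgnorm z hznet, one_mul]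
          _ ≤ θ := hd
      have := abs_le.1 h2
      linarith [this.1]
    have hkey : (1 - θ) ≤ ‖u + (t / ‖y‖) • x‖ := by
      have : g z (u + (t / ‖y‖) • x) = g z u := by
        simp [map_add, map_smul, hgz]
      calc (1 - θ) ≤ g z u := hgu
        _ = g z (u + (t / ‖y‖) • x) := this.symm
        _ ≤ |g z (u + (t / ‖y‖) • x)| := le_abs_self _
        _ ≤ ‖g z‖ * ‖u + (t / ‖y‖) • x‖ := by
            have := (g z).le_opNorm (u + (t / ‖y‖) • x)
            rwa [Real.norm_eq_abs] at this
        _ = ‖u + (t / ‖y‖) • x‖ := by rw [hgnorm z hznet, one_mul]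
    have hrep : y + t • x = ‖y‖ • (u + (t / ‖y‖) • x) := by
      have e1 : ‖y‖ • u = y := by rw [hu, smul_smul, mul_inv_cancel₀ hyn.ne', one_smul]
      have e2 : ‖y‖ • ((t / ‖y‖) • x) = t • x := by
        rw [smul_smul]
        congr 1
        field_simp
      rw [smul_add, e1, e2]
    have hfinal : ‖y‖ * ‖u + (t / ‖y‖) • x‖ = ‖y + t • x‖ := by
      rw [hrep, norm_smul, norm_norm]
    calc (1 - θ) * ‖y‖ = ‖y‖ * (1 - θ) := mul_comm _ _
      _ ≤ ‖y‖ * ‖u + (t / ‖y‖) • x‖ := by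
          exact mul_le_mul_of_nonneg_left hkey hyn.le
      _ = ‖y + t • x‖ := hfinal


theorem caseB_small (T : E →L[ℝ] H)
    (h : ∀ s : Finset (E →L[ℝ] ℝ), ∀ c : ℝ, 0 < c →
      ∃ x : E, ‖x‖ = 1 ∧ (∀ g ∈ s, g x = 0) ∧ ‖T x‖ < c)
    {ε : ℝ} (hε : 0 < ε) :
    ∃ M : Submodule ℝ E, ¬ FiniteDimensional ℝ M ∧ ∀ x ∈ M, ‖T x‖ ≤ ε * ‖x‖ := by
  classical
  -- the telescoping constants
  set κ : ℕ → ℝ := fun n => 2 - (2⁻¹ : ℝ) ^ n with hκ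
  have hκ1 : ∀ n, 1 ≤ κ n := by
    intro n
    have h1 : (2⁻¹ : ℝ) ^ n ≤ 1 := pow_le_one₀ (by norm_num) (by norm_num)
    simp only [hκ]; linarith
  have hκ2 : ∀ n, κ n ≤ 2 := by
    intro n
    have h1 : (0:ℝ) < (2⁻¹ : ℝ) ^ n := by positivity
    simp only [hκ]; linarith
  have hκlt : ∀ n, κ n < κ (n + 1) := by
    intro n
    have h1 : (2⁻¹ : ℝ) ^ (n+1) < (2⁻¹ : ℝ) ^ n := by
      apply pow_lt_pow_right_of_lt_one₀ (by norm_num) (by norm_num)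
      omega
    simp only [hκ]; linarith
  have hκ0 : ∀ n, (0:ℝ) < κ n := fun n => lt_of_lt_of_le one_pos (hκ1 n)
  -- step choice
  have step : ∀ l : List E, ∃ z : E, ‖z‖ = 1 ∧
      ‖T z‖ < ε * (2⁻¹ : ℝ) ^ (l.length + 1) / 8 ∧
      ∀ y ∈ Submodule.span ℝ {a | a ∈ l}, ∀ t : ℝ,
        κ l.length * ‖y‖ ≤ κ (l.length + 1) * ‖y + t • z‖ := by
    intro l
    haveI : FiniteDimensional ℝ (Submodule.span ℝ {a | a ∈ l}) :=
      FiniteDimensional.span_of_finite ℝ l.finite_toSet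
    set n := l.length
    set θ : ℝ := (κ (n+1) - κ n) / κ (n+1) with hθdef
    have hθpos : 0 < θ := div_pos (by linarith [hκlt n]) (hκ0 _)
    obtain ⟨z, hz1, hz2, hz3⟩ := exists_next T h (Submodule.span ℝ {a | a ∈ l}) hθpos
      (show (0:ℝ) < ε * (2⁻¹ : ℝ) ^ (n + 1) / 8 by positivity)
    refine ⟨z, hz1, hz2, ?_⟩
    intro y hy t
    have h1 := hz3 y hy t
    have h2 : (1 - θ) = κ n / κ (n+1) := by
      rw [hθdef, eq_div_iff (hκ0 (n+1)).ne', sub_mul, one_mul,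
        div_mul_cancel₀ _ (hκ0 (n+1)).ne']
      ring
    rw [h2, div_mul_eq_mul_div, div_le_iff₀ (hκ0 (n+1))] at h1
    linarith [h1]
  choose nxt hnxt1 hnxt2 hnxt3 using step
  -- the history and the sequence
  set hist : ℕ → List E := fun n => Nat.rec [] (fun _ ih => nxt ih :: ih) n with hhist
  set x : ℕ → E := fun n => nxt (hist n) with hx
  have hist_succ : ∀ n, hist (n + 1) = x n :: hist n := fun n => rfl
  have hist_len : ∀ n, (hist n).length = n := by
    intro n
    induction n with
    | zero => rfl
    | succ n ih => rw [hist_succ, List.length_cons, ih]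
  have hist_mem : ∀ n, {a : E | a ∈ hist n} = x '' Set.Iio n := by
    intro n
    induction n with
    | zero =>
      ext a
      simp [hhist]
    | succ n ih =>
      rw [hist_succ]
      ext a
      simp only [Set.mem_setOf_eq, List.mem_cons, Set.mem_image, Set.mem_Iio]
      constructor
      · rintro (rfl | hmem)
        · exact ⟨n, Nat.lt_succ_self n, rfl⟩
        · have hmem' : a ∈ x '' Set.Iio n := by rw [← ih]; exact hmem
          obtain ⟨m, hm, rfl⟩ := hmem'
          exact ⟨m, hm.trans (Nat.lt_succ_self n), rfl⟩
      · rintro ⟨m, hm, rfl⟩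
        rcases Nat.lt_succ_iff_lt_or_eq.1 hm with hm' | rfl
        · right
          have : x m ∈ {a : E | a ∈ hist n} := by rw [ih]; exact ⟨m, hm', rfl⟩
          exact this
        · left; rfl
  -- basic properties of x
  have hx1 : ∀ n, ‖x n‖ = 1 := fun n => hnxt1 _
  have hxT : ∀ n, ‖T (x n)‖ ≤ ε * (2⁻¹ : ℝ) ^ (n + 1) / 8 := by
    intro n
    have := hnxt2 (hist n)
    rw [hist_len] at this
    exact this.le
  have hxstep : ∀ n, ∀ y ∈ Submodule.span ℝ (x '' Set.Iio n), ∀ t : ℝ,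
      κ n * ‖y‖ ≤ κ (n + 1) * ‖y + t • x n‖ := by
    intro n y hy t
    have h3 := hnxt3 (hist n)
    rw [hist_len, hist_mem] at h3
    exact h3 y hy t
  -- partial sums
  set Sm : (ℕ → ℝ) → ℕ → E := fun a m => ∑ j ∈ Finset.range m, a j • x j with hSm
  have hmono : ∀ a : ℕ → ℝ, Monotone (fun m => κ m * ‖Sm a m‖) := by
    intro a
    apply monotone_nat_of_le_succ
    intro m
    have hy : Sm a m ∈ Submodule.span ℝ (x '' Set.Iio m) := by
      apply Submodule.sum_mem
      intro j hj
      exact Submodule.smul_mem _ _ (Submodule.subset_span ⟨j, Finset.mem_range.1 hj, rfl⟩)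
    have := hxstep m (Sm a m) hy (a m)
    have hsucc : Sm a (m+1) = Sm a m + a m • x m := Finset.sum_range_succ _ _
    rw [← hsucc] at this
    exact this
  have hSmb : ∀ (a : ℕ → ℝ) (n m : ℕ), m ≤ n → ‖Sm a m‖ ≤ 2 * ‖Sm a n‖ := by
    intro a n m hmn
    have h1 : κ m * ‖Sm a m‖ ≤ κ n * ‖Sm a n‖ := hmono a hmn
    nlinarith [hκ1 m, hκ2 n, norm_nonneg (Sm a m), norm_nonneg (Sm a n)]
  have hcoef : ∀ (a : ℕ → ℝ) (n m : ℕ), m < n → |a m| ≤ 4 * ‖Sm a n‖ := by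
    intro a n m hmn
    have h1 : a m • x m = Sm a (m+1) - Sm a m := by
      rw [hSm]; simp [Finset.sum_range_succ]
    have h2 : |a m| = ‖a m • x m‖ := by
      rw [norm_smul, hx1 m, mul_one, Real.norm_eq_abs]
    rw [h2, h1]
    calc ‖Sm a (m+1) - Sm a m‖ ≤ ‖Sm a (m+1)‖ + ‖Sm a m‖ := norm_sub_le _ _
      _ ≤ 2 * ‖Sm a n‖ + 2 * ‖Sm a n‖ := by
          have := hSmb a n (m+1) hmn
          have := hSmb a n m hmn.le
          linarith
      _ = 4 * ‖Sm a n‖ := by ring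
  have hTSm : ∀ (a : ℕ → ℝ) (n : ℕ), ‖T (Sm a n)‖ ≤ ε * ‖Sm a n‖ := by
    intro a n
    have h1 : T (Sm a n) = ∑ j ∈ Finset.range n, a j • T (x j) := by
      rw [hSm]; simp [map_sum, map_smul]
    rw [h1]
    calc ‖∑ j ∈ Finset.range n, a j • T (x j)‖
        ≤ ∑ j ∈ Finset.range n, ‖a j • T (x j)‖ := norm_sum_le _ _
      _ = ∑ j ∈ Finset.range n, |a j| * ‖T (x j)‖ := by
          apply Finset.sum_congr rfl
          intro j _
          rw [norm_smul, Real.norm_eq_abs]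
      _ ≤ ∑ j ∈ Finset.range n, (4 * ‖Sm a n‖) * (ε * (2⁻¹ : ℝ) ^ (j + 1) / 8) := by
          apply Finset.sum_le_sum
          intro j hj
          exact mul_le_mul (hcoef a n j (Finset.mem_range.1 hj)) (hxT j)
            (norm_nonneg _) (by positivity)
      _ = (4 * ‖Sm a n‖) * (ε / 8) * ∑ j ∈ Finset.range n, (2⁻¹ : ℝ) ^ (j+1) := by
          rw [Finset.mul_sum]
          apply Finset.sum_congr rfl
          intro j _
          ring
      _ ≤ (4 * ‖Sm a n‖) * (ε / 8) * 1 := by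
          apply mul_le_mul_of_nonneg_left _ (by positivity)
          have h2 : ∑ j ∈ Finset.range n, (2⁻¹ : ℝ) ^ (j+1)
              = 2⁻¹ * ∑ j ∈ Finset.range n, (2⁻¹ : ℝ) ^ j := by
            rw [Finset.mul_sum]
            apply Finset.sum_congr rfl
            intro j _
            ring
          have h3 : ∑ j ∈ Finset.range n, (2⁻¹ : ℝ) ^ j ≤ 2 := by
            have := sum_geometric_two_le n
            simpa [one_div] using this
          rw [h2]
          linarith
      _ ≤ ε * ‖Sm a n‖ := by nlinarith [norm_nonneg (Sm a n)]
  -- the span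
  refine ⟨Submodule.span ℝ (Set.range x), ?_, ?_⟩
  · -- infinite-dimensional
    intro hfd
    set x' : ℕ → ↥(Submodule.span ℝ (Set.range x)) :=
      fun n => ⟨x n, Submodule.subset_span ⟨n, rfl⟩⟩ with hx'
    have hindep : LinearIndependent ℝ x := by
      rw [linearIndependent_iff']
      intro s g hsum i his
      obtain ⟨n, hn⟩ := s.exists_nat_subset_range
      set a : ℕ → ℝ := fun j => if j ∈ s then g j else 0 with ha
      have hSa : Sm a n = 0 := by
        have heq : Sm a n = ∑ j ∈ s, g j • x j := by
          simp only [hSm]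
          rw [← Finset.sum_subset hn (fun j _ hj => by simp [ha, hj])]
          exact Finset.sum_congr rfl fun j hj => by simp [ha, hj]
        rw [heq, hsum]
      have := hcoef a n i (Finset.mem_range.1 (hn his))
      rw [hSa, norm_zero, mul_zero] at this
      have hai : a i = g i := by simp [ha, his]
      rw [hai] at this
      exact abs_eq_zero.1 (le_antisymm this (abs_nonneg _))
    have hindep' : LinearIndependent ℝ x' := by
      apply LinearIndependent.of_comp (Submodule.span ℝ (Set.range x)).subtype
      convert hindep
      rfl
    haveI := hfd
    haveI hfin : Finite ℕ := LinearIndependent.finite hindep'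
    exact not_finite ℕ
  · -- the norm bound
    intro y hy
    obtain ⟨a, rfl⟩ := Finsupp.mem_span_range_iff_exists_finsupp.1 hy
    obtain ⟨n, hn⟩ := a.support.exists_nat_subset_range
    have heq : (a.sum fun i r => r • x i) = Sm (⇑a) n := by
      rw [hSm, Finsupp.sum]
      apply Finset.sum_subset hn
      intro j _ hj
      rw [Finsupp.notMem_support_iff.1 hj, zero_smul]
    rw [heq]
    exact hTSm (⇑a) n


end auxlemmas

section auxlemmas2

variable {H : Type*} [NormedAddCommGroup H] [InnerProductSpace ℝ H]
variable {E : Type*} [NormedAddCommGroup E] [NormedSpace ℝ E]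

theorem caseA_hilbertian (T : E →L[ℝ] H)
    (hA : ∃ (s : Finset (E →L[ℝ] ℝ)) (c : ℝ), 0 < c ∧
      ∀ x : E, (∀ g ∈ s, g x = 0) → c * ‖x‖ ≤ ‖T x‖) :
    ∃ (B : E →ₗ[ℝ] E →ₗ[ℝ] ℝ) (c C : ℝ), 0 < c ∧
      (∀ x y, B x y = B y x) ∧
      ∀ x, c * ‖x‖ ^ 2 ≤ B x x ∧ B x x ≤ C * ‖x‖ ^ 2 := by
  obtain ⟨s, c, hc, hbelow⟩ := hA
  classical
  have key2 : ∃ D : ℝ, 0 ≤ D ∧ ∀ x : E, ‖x‖^2 ≤ D * ‖T x‖^2 + D * ∑ g ∈ s, (g x)^2 := by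
    set G : E →ₗ[ℝ] (↥s → ℝ) := LinearMap.pi (fun i => ((i : E →L[ℝ] ℝ) : E →ₗ[ℝ] ℝ)) with hG
    haveI : FiniteDimensional ℝ (LinearMap.range G) := inferInstance
    obtain ⟨S, hS⟩ := G.rangeRestrict.exists_rightInverse_of_surjective
      (LinearMap.range_eq_top.2 G.surjective_rangeRestrict)
    let Sc : ↥(LinearMap.range G) →L[ℝ] E := LinearMap.toContinuousLinearMap S
    set a : ℝ := c⁻¹ with ha
    set b : ℝ := c⁻¹ * ((‖T‖ + c) * ‖Sc‖) with hb
    have ha0 : 0 ≤ a := by positivity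
    have hb0 : 0 ≤ b := by positivity
    have key : ∀ x : E, ‖x‖ ≤ a * ‖T x‖ + b * ‖G x‖ := by
      intro x
      set w : E := S (G.rangeRestrict x) with hw
      have hfix : G.rangeRestrict (S (G.rangeRestrict x)) = G.rangeRestrict x := by
        rw [← LinearMap.comp_apply, hS]; rfl
      have hGw : G (x - w) = 0 := by
        have h0 : G.rangeRestrict (x - w) = 0 := by
          rw [map_sub, hw, hfix, sub_self]
        have := congrArg Subtype.val h0
        simpa using this
      have hker : ∀ g ∈ s, g (x - w) = 0 := by
        intro g hg
        have := congrArg (fun f => f (⟨g, hg⟩ : ↥s)) hGw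
        simpa [hG] using this
      have h1 : c * ‖x - w‖ ≤ ‖T (x - w)‖ := hbelow _ hker
      have h2 : ‖T (x - w)‖ ≤ ‖T x‖ + ‖T‖ * ‖w‖ := by
        calc ‖T (x - w)‖ = ‖T x - T w‖ := by rw [map_sub]
          _ ≤ ‖T x‖ + ‖T w‖ := norm_sub_le _ _
          _ ≤ ‖T x‖ + ‖T‖ * ‖w‖ := by have := T.le_opNorm w; linarith
      have h3 : ‖w‖ ≤ ‖Sc‖ * ‖G x‖ := by
        have e1 : ‖w‖ = ‖Sc (G.rangeRestrict x)‖ := rfl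
        have e2 : ‖G.rangeRestrict x‖ = ‖G x‖ := rfl
        rw [e1, ← e2]
        exact Sc.le_opNorm _
      have h4 : ‖x‖ ≤ ‖x - w‖ + ‖w‖ := by
        calc ‖x‖ = ‖x - w + w‖ := by rw [sub_add_cancel]
          _ ≤ ‖x - w‖ + ‖w‖ := norm_add_le _ _
      have hcx : c * ‖x‖ ≤ ‖T x‖ + (‖T‖ + c) * (‖Sc‖ * ‖G x‖) := by
        nlinarith [h1.trans h2, mul_le_mul_of_nonneg_left h4 hc.le,
          mul_le_mul_of_nonneg_left h3 (add_nonneg (norm_nonneg (T : E →L[ℝ] H)) hc.le)]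
      have := mul_le_mul_of_nonneg_left hcx (inv_nonneg.2 hc.le)
      rw [← mul_assoc, inv_mul_cancel₀ hc.ne', one_mul] at this
      calc ‖x‖ ≤ c⁻¹ * (‖T x‖ + (‖T‖ + c) * (‖Sc‖ * ‖G x‖)) := this
        _ = a * ‖T x‖ + b * ‖G x‖ := by rw [ha, hb]; ring
    refine ⟨2 * a ^ 2 + 2 * b ^ 2, by positivity, fun x => ?_⟩
    have hGle : ‖G x‖ ^ 2 ≤ ∑ g ∈ s, (g x) ^ 2 := by
      have hnn : (0:ℝ) ≤ ∑ g ∈ s, (g x) ^ 2 := Finset.sum_nonneg fun g _ => sq_nonneg _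
      have hsq : ‖G x‖ ≤ Real.sqrt (∑ g ∈ s, (g x) ^ 2) := by
        rw [pi_norm_le_iff_of_nonneg (Real.sqrt_nonneg _)]
        intro i
        have h1 : (G x i) ^ 2 ≤ ∑ g ∈ s, (g x) ^ 2 := by
          have : ((i : E →L[ℝ] ℝ) x) ^ 2 ≤ ∑ g ∈ s, (g x) ^ 2 :=
            Finset.single_le_sum (fun g _ => sq_nonneg ((g : E →L[ℝ] ℝ) x)) i.2
          simpa [hG] using this
        calc ‖G x i‖ = Real.sqrt ((G x i) ^ 2) := by rw [Real.sqrt_sq_eq_abs]; rfl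
          _ ≤ Real.sqrt (∑ g ∈ s, (g x) ^ 2) := Real.sqrt_le_sqrt h1
      nlinarith [norm_nonneg (G x), Real.sq_sqrt hnn]
    have hx := key x
    nlinarith [norm_nonneg x, norm_nonneg (T x), norm_nonneg (G x),
      sq_nonneg (a * ‖T x‖ - b * ‖G x‖), mul_le_mul_of_nonneg_left hGle (by positivity : (0:ℝ) ≤ 2 * b^2)]
  obtain ⟨D, hD0, hDx⟩ := key2
  refine ⟨LinearMap.mk₂ ℝ (fun x y => ⟪T x, T y⟫ + D * ∑ g ∈ s, g x * g y)
      (fun m n y => ?_) (fun t m y => ?_) (fun x m n => ?_) (fun t x m => ?_),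
    (D + 1)⁻¹, ‖T‖ ^ 2 + D * ∑ g ∈ s, ‖g‖ ^ 2, by positivity, ?_, ?_⟩
  · simp only [map_add, inner_add_left, ContinuousLinearMap.add_apply, add_mul,
      Finset.sum_add_distrib, mul_add]
    ring
  · simp only [map_smul, inner_smul_left, RCLike.conj_to_real, ContinuousLinearMap.coe_smul',
      Pi.smul_apply, smul_eq_mul, conj_trivial, Finset.mul_sum]
    conv_rhs => rw [mul_add, Finset.mul_sum]
    congr 1
    exact Finset.sum_congr rfl fun g _ => by ring
  · simp only [map_add, inner_add_right, mul_add, Finset.sum_add_distrib]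
    ring
  · simp only [map_smul, inner_smul_right, smul_eq_mul, Finset.mul_sum]
    conv_rhs => rw [mul_add, Finset.mul_sum]
    congr 1
    exact Finset.sum_congr rfl fun g _ => by ring
  · intro x y
    simp only [LinearMap.mk₂_apply]
    rw [real_inner_comm]
    congr 1
    congr 1
    exact Finset.sum_congr rfl fun g _ => mul_comm _ _
  · intro x
    simp only [LinearMap.mk₂_apply]
    have hdiag : ⟪T x, T x⟫ = ‖T x‖ ^ 2 := real_inner_self_eq_norm_sq _
    have hsum : ∑ g ∈ s, g x * g x = ∑ g ∈ s, (g x) ^ 2 :=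
      Finset.sum_congr rfl fun g _ => (sq (g x)).symm
    rw [hdiag, hsum]
    have hsnn : (0:ℝ) ≤ ∑ g ∈ s, (g x) ^ 2 := Finset.sum_nonneg fun g _ => sq_nonneg _
    have hTnn : (0:ℝ) ≤ ‖T x‖ ^ 2 := sq_nonneg _
    constructor
    · rw [inv_mul_le_iff₀ (by positivity)]
      have := hDx x
      nlinarith [mul_nonneg hD0 hsnn, mul_nonneg (mul_nonneg hD0 hD0) hsnn]
    · have h1 : ‖T x‖ ^ 2 ≤ ‖T‖ ^ 2 * ‖x‖ ^ 2 := by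
        nlinarith [T.le_opNorm x, norm_nonneg (T x), norm_nonneg x, norm_nonneg (T : E →L[ℝ] H)]
      have h2 : ∑ g ∈ s, (g x) ^ 2 ≤ (∑ g ∈ s, ‖g‖ ^ 2) * ‖x‖ ^ 2 := by
        rw [Finset.sum_mul]
        apply Finset.sum_le_sum
        intro g _
        have hgx : |g x| ≤ ‖g‖ * ‖x‖ := by simpa [Real.norm_eq_abs] using g.le_opNorm x
        nlinarith [mul_self_le_mul_self (abs_nonneg (g x)) hgx, sq_abs (g x)]
      nlinarith [mul_le_mul_of_nonneg_left h2 hD0]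


theorem caseA_hilbertian' {E : Type} [NormedAddCommGroup E] [NormedSpace ℝ E]
    {H : Type*} [NormedAddCommGroup H] [InnerProductSpace ℝ H] (T : E →L[ℝ] H)
    (hA : ∃ (s : Finset (E →L[ℝ] ℝ)) (c : ℝ), 0 < c ∧
      ∀ x : E, (∀ g ∈ s, g x = 0) → c * ‖x‖ ≤ ‖T x‖) :
    IsHilbertian E := by
  unfold IsHilbertian
  exact caseA_hilbertian T hA

theorem nonHilbertian_small {E : Type} [NormedAddCommGroup E] [NormedSpace ℝ E]
    {H : Type*} [NormedAddCommGroup H] [InnerProductSpace ℝ H] (T : E →L[ℝ] H)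
    (hnot : ¬ IsHilbertian E) {ε : ℝ} (hε : 0 < ε) :
    ∃ M : Submodule ℝ E, ¬ FiniteDimensional ℝ M ∧ ∀ x ∈ M, ‖T x‖ ≤ ε * ‖x‖ := by

  by_cases hA : ∃ (s : Finset (E →L[ℝ] ℝ)) (c : ℝ), 0 < c ∧
      ∀ x : E, (∀ g ∈ s, g x = 0) → c * ‖x‖ ≤ ‖T x‖
  · exact absurd (caseA_hilbertian' T hA) hnot
  · push_neg at hA
    apply caseB_small T _ hε
    intro s c hc
    obtain ⟨x, hker, hlt⟩ := hA s c hc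
    have hx0 : x ≠ 0 := by
      rintro rfl
      simp at hlt
    have hxn : 0 < ‖x‖ := norm_pos_iff.2 hx0
    refine ⟨‖x‖⁻¹ • x, ?_, ?_, ?_⟩
    · rw [norm_smul, norm_inv, norm_norm, inv_mul_cancel₀ hxn.ne']
    · intro g hg
      rw [map_smul, hker g hg, smul_zero]
    · rw [map_smul, norm_smul, norm_inv, norm_norm]
      calc ‖x‖⁻¹ * ‖T x‖ < ‖x‖⁻¹ * (c * ‖x‖) :=
            mul_lt_mul_of_pos_left hlt (inv_pos.2 hxn)
        _ = c := by field_simp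

end auxlemmas2

/-- if `Y` is hereditarily indecomposable and `X = Y ⊕ ℓ₂`, then `X`
contains no direct sum of two non-Hilbertian subspaces: whenever `U, V` are
infinite-dimensional closed subspaces of `X` in topological direct sum
(`U ∩ V = {0}` and `U + V` closed), then `U` or `V` is Hilbertian. -/
theorem statement18 (Y : Type) [NormedAddCommGroup Y] [NormedSpace ℝ Y] [CompleteSpace Y]
    (hY : IsHI Y) :
    ∀ U V : Submodule ℝ (Y × ellTwo),
      IsClosed (U : Set (Y × ellTwo)) → IsClosed (V : Set (Y × ellTwo)) →
      ¬ FiniteDimensional ℝ U → ¬ FiniteDimensional ℝ V →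
      U ⊓ V = ⊥ →
      IsClosed ((U ⊔ V : Submodule ℝ (Y × ellTwo)) : Set (Y × ellTwo)) →
      IsHilbertian ↥U ∨ IsHilbertian ↥V := by
  intro U V hUc hVc _hUfd _hVfd hUV hsum
  by_contra hcon
  push_neg at hcon
  obtain ⟨hUnot, hVnot⟩ := hcon
  haveI hUcomp : CompleteSpace ↥U := hUc.completeSpace_coe
  haveI hVcomp : CompleteSpace ↥V := hVc.completeSpace_coe
  haveI hWcomp : CompleteSpace ↥(U ⊔ V : Submodule ℝ (Y × ellTwo)) := hsum.completeSpace_coe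
  -- the sum map and the gap constant
  set X := Y × ellTwo with hX
  let φ₀ : ↥U × ↥V →ₗ[ℝ] ↥(U ⊔ V) :=
  { toFun := fun p => ⟨(p.1 : X) + (p.2 : X), Submodule.add_mem_sup p.1.2 p.2.2⟩
    map_add' := by
      intro p q
      apply Subtype.ext
      show ((p + q).1 : X) + ((p + q).2 : X) = ((p.1 : X) + (p.2 : X)) + ((q.1 : X) + (q.2 : X))
      simp only [Prod.fst_add, Prod.snd_add, Submodule.coe_add]
      abel
    map_smul' := by
      intro t p
      apply Subtype.ext
      show ((t • p).1 : X) + ((t • p).2 : X) = t • ((p.1 : X) + (p.2 : X))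
      simp only [Prod.smul_fst, Prod.smul_snd, Submodule.coe_smul]
      rw [smul_add] }
  let φ : ↥U × ↥V →L[ℝ] ↥(U ⊔ V) := φ₀.mkContinuous 2 (by
    intro p
    have h1 : ‖φ₀ p‖ = ‖(p.1 : X) + (p.2 : X)‖ := rfl
    rw [h1]
    calc ‖(p.1 : X) + (p.2 : X)‖ ≤ ‖(p.1 : X)‖ + ‖(p.2 : X)‖ := norm_add_le _ _
      _ ≤ ‖p‖ + ‖p‖ := by
          have := norm_fst_le p
          have := norm_snd_le p
          exact add_le_add (norm_fst_le p) (norm_snd_le p)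
      _ = 2 * ‖p‖ := by ring)
  have hker : LinearMap.ker (φ : ↥U × ↥V →ₗ[ℝ] ↥(U ⊔ V)) = ⊥ := by
    rw [LinearMap.ker_eq_bot']
    intro p hp
    have hp' : (p.1 : X) + (p.2 : X) = 0 := by
      have := congrArg (Subtype.val) hp
      simpa [φ, φ₀] using this
    have h1 : (p.1 : X) = -(p.2 : X) := by rwa [add_eq_zero_iff_eq_neg] at hp'
    have hmem : (p.1 : X) ∈ U ⊓ V := by
      refine ⟨p.1.2, ?_⟩
      rw [h1]
      exact V.neg_mem p.2.2
    rw [hUV] at hmem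
    have hp1 : (p.1 : X) = 0 := hmem
    have hp2 : (p.2 : X) = 0 := by rw [h1] at hp1; simpa using hp1
    have : p = 0 := by
      apply Prod.ext
      · exact Subtype.ext hp1
      · exact Subtype.ext hp2
    exact this
  have hrange : LinearMap.range (φ : ↥U × ↥V →ₗ[ℝ] ↥(U ⊔ V)) = ⊤ := by
    rw [LinearMap.range_eq_top]
    intro z
    obtain ⟨u, hu, v, hv, huv⟩ := Submodule.mem_sup.1 z.2
    exact ⟨(⟨u, hu⟩, ⟨v, hv⟩), Subtype.ext huv⟩
  let e := ContinuousLinearEquiv.ofBijective φ hker hrange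
  set C : ℝ := ‖(e.symm : ↥(U ⊔ V) →L[ℝ] ↥U × ↥V)‖ with hCdef
  have hC0 : 0 ≤ C := norm_nonneg _
  have hC : ∀ (u : ↥U) (v : ↥V), ‖(u : X)‖ ≤ C * ‖(u : X) + (v : X)‖ ∧
      ‖(v : X)‖ ≤ C * ‖(u : X) + (v : X)‖ := by
    intro u v
    have h1 : e.symm (e (u, v)) = (u, v) := e.symm_apply_apply _
    have h2 : ‖((u, v) : ↥U × ↥V)‖ ≤ C * ‖e (u, v)‖ := by
      conv_lhs => rw [← h1]
      exact (e.symm : ↥(U ⊔ V) →L[ℝ] ↥U × ↥V).le_opNorm _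
    have h3 : ‖e (u, v)‖ = ‖(u : X) + (v : X)‖ := rfl
    rw [h3] at h2
    constructor
    · exact le_trans (norm_fst_le ((u, v) : ↥U × ↥V)) h2
    · exact le_trans (norm_snd_le ((u, v) : ↥U × ↥V)) h2
  
  -- choose ε
  set ε : ℝ := min 2⁻¹ ((4 * (C + 1))⁻¹) with hεdef
  have hε : 0 < ε := lt_min (by norm_num) (by positivity)
  have hε1 : ε ≤ 2⁻¹ := min_le_left _ _
  have hε2 : ε ≤ (4 * (C + 1))⁻¹ := min_le_right _ _
  have hCε : C * ε ≤ 4⁻¹ := by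
    calc C * ε ≤ C * (4 * (C + 1))⁻¹ := mul_le_mul_of_nonneg_left hε2 hC0
      _ ≤ 4⁻¹ := by
          rw [← div_eq_mul_inv, div_le_iff₀ (by positivity : (0:ℝ) < 4 * (C + 1))]
          nlinarith
  -- a useful fact about the product norm
  have hfstnorm : ∀ z : X, ‖z.2‖ ≤ 2⁻¹ * ‖z‖ → ‖z.1‖ = ‖z‖ := by
    intro z hz
    have hmax : ‖z‖ = max ‖z.1‖ ‖z.2‖ := Prod.norm_def z
    rcases le_total ‖z.1‖ ‖z.2‖ with h | h
    · have h1 : ‖z‖ = ‖z.2‖ := by rw [hmax, max_eq_right h]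
      have h2 : ‖z‖ = 0 := by
        rw [h1] at hz ⊢
        linarith [norm_nonneg z.2]
      have h3 : ‖z.1‖ ≤ 0 := by
        have := norm_fst_le z
        linarith
      rw [h2]
      exact le_antisymm h3 (norm_nonneg _)
    · rw [hmax, max_eq_left h]
  -- infinitely singular restrictions: small subspaces
  have getSmall : ∀ (W : Submodule ℝ X), IsClosed (W : Set X) → ¬ IsHilbertian ↥W →
      ∃ N : Submodule ℝ X, N ≤ W ∧ IsClosed (N : Set X) ∧ ¬ FiniteDimensional ℝ N ∧
        ∀ z ∈ N, ‖z.2‖ ≤ ε * ‖z‖ := by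
    intro W hWc hWnot
    obtain ⟨M, hMfd, hMsmall⟩ := nonHilbertian_small
      ((ContinuousLinearMap.snd ℝ Y ellTwo).comp W.subtypeL) hWnot hε
    refine ⟨(M.map W.subtype).topologicalClosure, ?_, ?_, ?_, ?_⟩
    · exact Submodule.topologicalClosure_minimal _ (Submodule.map_subtype_le W M) hWc
    · exact Submodule.isClosed_topologicalClosure _
    · intro hfd
      haveI := hfd
      haveI : FiniteDimensional ℝ ↥(M.map W.subtype) :=
        Submodule.finiteDimensional_of_le (Submodule.le_topologicalClosure _)
      exact hMfd ((Submodule.equivMapOfInjective W.subtype W.injective_subtype M).symm.finiteDimensional)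
    · have hsub : ((M.map W.subtype : Submodule ℝ X) : Set X) ⊆ {z : X | ‖z.2‖ ≤ ε * ‖z‖} := by
        rintro z ⟨y, hy, rfl⟩
        exact hMsmall y hy
      have hDclosed : IsClosed {z : X | ‖z.2‖ ≤ ε * ‖z‖} :=
        isClosed_le (continuous_norm.comp continuous_snd) (continuous_const.mul continuous_norm)
      intro z hz
      have : z ∈ closure ((M.map W.subtype : Submodule ℝ X) : Set X) := by
        rw [← Submodule.topologicalClosure_coe]
        exact hz
      exact closure_minimal hsub hDclosed this
  obtain ⟨NU, hNUle, hNUc, hNUfd, hNUsm⟩ := getSmall U hUc hUnot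
  obtain ⟨NV, hNVle, hNVc, hNVfd, hNVsm⟩ := getSmall V hVc hVnot
  haveI : CompleteSpace ↥NU := hNUc.completeSpace_coe
  haveI : CompleteSpace ↥NV := hNVc.completeSpace_coe
  -- the first-coordinate maps
  let fU : ↥NU →L[ℝ] Y := (ContinuousLinearMap.fst ℝ Y ellTwo).comp NU.subtypeL
  let fV : ↥NV →L[ℝ] Y := (ContinuousLinearMap.fst ℝ Y ellTwo).comp NV.subtypeL
  have hfUiso : ∀ w : ↥NU, ‖fU w‖ = ‖w‖ := by
    intro w
    have h1 : ‖(w : X).2‖ ≤ 2⁻¹ * ‖(w : X)‖ := by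
      calc ‖(w : X).2‖ ≤ ε * ‖(w : X)‖ := hNUsm _ w.2
        _ ≤ 2⁻¹ * ‖(w : X)‖ := mul_le_mul_of_nonneg_right hε1 (norm_nonneg _)
    exact hfstnorm _ h1
  have hfViso : ∀ w : ↥NV, ‖fV w‖ = ‖w‖ := by
    intro w
    have h1 : ‖(w : X).2‖ ≤ 2⁻¹ * ‖(w : X)‖ := by
      calc ‖(w : X).2‖ ≤ ε * ‖(w : X)‖ := hNVsm _ w.2
        _ ≤ 2⁻¹ * ‖(w : X)‖ := mul_le_mul_of_nonneg_right hε1 (norm_nonneg _)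
    exact hfstnorm _ h1
  -- the images in Y
  set A : Submodule ℝ Y := NU.map (LinearMap.fst ℝ Y ellTwo) with hA
  set B : Submodule ℝ Y := NV.map (LinearMap.fst ℝ Y ellTwo) with hB
  have hrangeA : Set.range fU = (A : Set Y) := by
    ext z
    constructor
    · rintro ⟨w, rfl⟩
      exact ⟨(w : X), w.2, rfl⟩
    · rintro ⟨w, hw, rfl⟩
      exact ⟨⟨w, hw⟩, rfl⟩
  have hrangeB : Set.range fV = (B : Set Y) := by
    ext z
    constructor
    · rintro ⟨w, rfl⟩
      exact ⟨(w : X), w.2, rfl⟩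
    · rintro ⟨w, hw, rfl⟩
      exact ⟨⟨w, hw⟩, rfl⟩
  have hAc : IsClosed (A : Set Y) := by
    rw [← hrangeA]
    exact ((AddMonoidHomClass.isometry_of_norm fU hfUiso).antilipschitz).isClosed_range
      fU.uniformContinuous
  have hBc : IsClosed (B : Set Y) := by
    rw [← hrangeB]
    exact ((AddMonoidHomClass.isometry_of_norm fV hfViso).antilipschitz).isClosed_range
      fV.uniformContinuous
  -- infinite-dimensionality of A and B
  have hAfd : ¬ FiniteDimensional ℝ ↥A := by
    intro hfd
    apply hNUfd
    have hgA : ∀ w : ↥NU, fU w ∈ A := fun w => ⟨(w : X), w.2, rfl⟩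
    let gA : ↥NU →ₗ[ℝ] ↥A := (fU : ↥NU →ₗ[ℝ] Y).codRestrict A hgA
    have hinj : Function.Injective gA := by
      intro w w' hww
      have h1 : fU w = fU w' := congrArg Subtype.val hww
      have h2 : ‖fU (w - w')‖ = 0 := by rw [map_sub, h1, sub_self, norm_zero]
      rw [hfUiso] at h2
      have := norm_eq_zero.1 h2
      exact sub_eq_zero.1 this
    have hsurj : Function.Surjective gA := by
      rintro ⟨a, w, hw, rfl⟩
      exact ⟨⟨w, hw⟩, rfl⟩
    haveI := hfd
    exact (LinearEquiv.ofBijective gA ⟨hinj, hsurj⟩).symm.finiteDimensional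
  have hBfd : ¬ FiniteDimensional ℝ ↥B := by
    intro hfd
    apply hNVfd
    have hgB : ∀ w : ↥NV, fV w ∈ B := fun w => ⟨(w : X), w.2, rfl⟩
    let gB : ↥NV →ₗ[ℝ] ↥B := (fV : ↥NV →ₗ[ℝ] Y).codRestrict B hgB
    have hinj : Function.Injective gB := by
      intro w w' hww
      have h1 : fV w = fV w' := congrArg Subtype.val hww
      have h2 : ‖fV (w - w')‖ = 0 := by rw [map_sub, h1, sub_self, norm_zero]
      rw [hfViso] at h2
      have := norm_eq_zero.1 h2
      exact sub_eq_zero.1 this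
    have hsurj : Function.Surjective gB := by
      rintro ⟨a, w, hw, rfl⟩
      exact ⟨⟨w, hw⟩, rfl⟩
    haveI := hfd
    exact (LinearEquiv.ofBijective gB ⟨hinj, hsurj⟩).symm.finiteDimensional
  -- key smallness estimate for sums/differences
  have hKey : ∀ u v : X, u ∈ NU → v ∈ NV → ‖(u + v).2‖ ≤ 2⁻¹ * ‖u + v‖ := by
    intro u v hu hv
    have hCuv := hC ⟨u, hNUle hu⟩ ⟨v, hNVle hv⟩
    have h1 : ‖u‖ ≤ C * ‖u + v‖ := hCuv.1
    have h2 : ‖v‖ ≤ C * ‖u + v‖ := hCuv.2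
    have h3 : ‖(u + v).2‖ ≤ ε * (‖u‖ + ‖v‖) := by
      have hu2 : ‖u.2‖ ≤ ε * ‖u‖ := hNUsm u hu
      have hv2 : ‖v.2‖ ≤ ε * ‖v‖ := hNVsm v hv
      calc ‖(u + v).2‖ = ‖u.2 + v.2‖ := rfl
        _ ≤ ‖u.2‖ + ‖v.2‖ := norm_add_le _ _
        _ ≤ ε * (‖u‖ + ‖v‖) := by rw [mul_add]; exact add_le_add hu2 hv2
    calc ‖(u + v).2‖ ≤ ε * (‖u‖ + ‖v‖) := h3
      _ ≤ ε * (2 * (C * ‖u + v‖)) := by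
          apply mul_le_mul_of_nonneg_left _ hε.le
          linarith
      _ = 2 * (C * ε) * ‖u + v‖ := by ring
      _ ≤ 2⁻¹ * ‖u + v‖ := by
          apply mul_le_mul_of_nonneg_right _ (norm_nonneg _)
          linarith
  -- A ⊓ B = ⊥
  have hABbot : A ⊓ B = ⊥ := by
    rw [Submodule.eq_bot_iff]
    intro z hz
    obtain ⟨⟨u, hu, huz⟩, ⟨v, hv, hvz⟩⟩ := hz
    have huz' : u.1 = z := huz
    have hvz' : v.1 = z := hvz
    have hnv : -v ∈ NV := NV.neg_mem hv
    have hsm := hKey u (-v) hu hnv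
    have hfst : (u + (-v)).1 = 0 := by
      show u.1 + (-v).1 = 0
      have : (-v).1 = -(v.1) := rfl
      rw [this, huz', hvz', add_neg_cancel]
    have hnorm1 : ‖u + (-v)‖ = ‖(u + (-v)).1‖ := (hfstnorm _ hsm).symm
    rw [hfst, norm_zero] at hnorm1
    have huv : u = v := by
      have : u + (-v) = 0 := norm_eq_zero.1 hnorm1
      rw [add_neg_eq_zero] at this
      exact this
    have hmem : u ∈ U ⊓ V := ⟨hNUle hu, huv ▸ hNVle hv⟩
    rw [hUV] at hmem
    have hu0 : u = (0 : X) := hmem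
    rw [← huz', hu0]
    rfl
  -- A ⊔ B is closed
  have hABclosed : IsClosed ((A ⊔ B : Submodule ℝ Y) : Set Y) := by
    let ψ : ↥NU × ↥NV →L[ℝ] Y :=
      fU.comp (ContinuousLinearMap.fst ℝ ↥NU ↥NV) + fV.comp (ContinuousLinearMap.snd ℝ ↥NU ↥NV)
    have hψ : ∀ p : ↥NU × ↥NV, ψ p = (p.1 : X).1 + (p.2 : X).1 := fun p => rfl
    have hbound : ∀ p : ↥NU × ↥NV, ‖p‖ ≤ (C + 1) * ‖ψ p‖ := by
      intro p
      have hsum2 := hKey (p.1 : X) (p.2 : X) p.1.2 p.2.2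
      have hfsteq : ‖((p.1 : X) + (p.2 : X)).1‖ = ‖(p.1 : X) + (p.2 : X)‖ := hfstnorm _ hsum2
      have hψeq : ‖ψ p‖ = ‖(p.1 : X) + (p.2 : X)‖ := by
        rw [hψ]
        exact hfsteq
      have hCp := hC ⟨(p.1 : X), hNUle p.1.2⟩ ⟨(p.2 : X), hNVle p.2.2⟩
      have hmax : ‖p‖ = max ‖p.1‖ ‖p.2‖ := Prod.norm_def p
      rw [hmax, hψeq]
      have hn1 : ‖(p.1 : X)‖ ≤ C * ‖(p.1 : X) + (p.2 : X)‖ := hCp.1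
      have hn2 : ‖(p.2 : X)‖ ≤ C * ‖(p.1 : X) + (p.2 : X)‖ := hCp.2
      have e1 : ‖p.1‖ = ‖(p.1 : X)‖ := rfl
      have e2 : ‖p.2‖ = ‖(p.2 : X)‖ := rfl
      have hnn : 0 ≤ ‖(p.1 : X) + (p.2 : X)‖ := norm_nonneg _
      apply max_le
      · rw [e1]; nlinarith
      · rw [e2]; nlinarith
    have hanti : AntilipschitzWith ((C + 1).toNNReal) ψ := by
      apply ψ.antilipschitz_of_bound
      intro p
      rw [Real.coe_toNNReal _ (by positivity)]
      exact hbound p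
    have hrangeψ : Set.range ψ = ((A ⊔ B : Submodule ℝ Y) : Set Y) := by
      ext z
      constructor
      · rintro ⟨p, rfl⟩
        rw [hψ]
        exact Submodule.add_mem_sup ⟨(p.1 : X), p.1.2, rfl⟩ ⟨(p.2 : X), p.2.2, rfl⟩
      · intro hz
        obtain ⟨a, ⟨u, hu, rfl⟩, b, ⟨v, hv, rfl⟩, rfl⟩ := Submodule.mem_sup.1 hz
        exact ⟨(⟨u, hu⟩, ⟨v, hv⟩), rfl⟩
    rw [← hrangeψ]
    exact hanti.isClosed_range ψ.uniformContinuous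
  exact hY A B hAc hBc hAfd hBfd hABbot hABclosed
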